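/- Let z_1,…,z_n ∈ ℝᵈ, 𝒜 a finite subset of ℝ, and m > dn. For each fixed A ∈ 𝒜^{n×m} there is a Lebesgue-null set 𝒞(A) ⊆ ℝᵐ such that for every λ ∉ 𝒞(A) and every choice of vectors z_1,…,z_n ∈ ℝᵈ, at least one of the matrices M_j = −Σ_{i=1}^n z_i z_iᵀ A_{ij} + λ_j I_d is nonsingular. -/

import Mathlib

open MeasureTheory Finset

open Matrix Finset
open scoped InnerProductSpace

lemma parseval_aux {d : ℕ} (b : OrthonormalBasis (Fin d) ℝ (EuclideanSpace ℝ (Fin d)))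
    (w : EuclideanSpace ℝ (Fin d)) :
    ∑ k, (⟪b k, w⟫_ℝ)^2 = ∑ p, (w p)^2 := by
  have h := b.sum_inner_mul_inner w w
  have h2 : ∀ k, ⟪w, b k⟫_ℝ = ⟪b k, w⟫_ℝ := fun k => real_inner_comm _ _
  simp only [h2] at h
  have h3 : ⟪w, w⟫_ℝ = ∑ p, (w p)^2 := by
    rw [PiLp.inner_apply]
    refine Finset.sum_congr rfl fun p _ => ?_
    simp only [RCLike.inner_apply, conj_trivial]; ring
  rw [← h3, ← h]
  congr 1; funext k; ring

lemma eig_close {d : ℕ} (S S₀ : Matrix (Fin d) (Fin d) ℝ) (hS₀ : S₀.IsHermitian)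
    (lam : ℝ) (v : Fin d → ℝ) (hv : v ≠ 0) (heig : S.mulVec v = lam • v) :
    ∃ k, |lam - hS₀.eigenvalues k| ≤ ∑ p, ∑ q, |S p q - S₀ p q| := by
  have hd : d ≠ 0 := by rintro rfl; exact hv (funext fun p => p.elim0)
  haveI : NeZero d := ⟨hd⟩
  set b := hS₀.eigenvectorBasis with hb
  set μ := hS₀.eigenvalues with hμ
  -- Parseval with dotProduct
  have parseval : ∀ w : Fin d → ℝ, ∑ k, (dotProduct (b k) w)^2 = ∑ p, (w p)^2 := by
    intro w
    have := parseval_aux b (WithLp.toLp 2 w)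
    convert this using 2 with k
    simp [PiLp.inner_apply, dotProduct, mul_comm]
  set c : Fin d → ℝ := fun k => dotProduct (b k) v with hc
  set E : Matrix (Fin d) (Fin d) ℝ := S₀ - S with hE
  set w : Fin d → ℝ := E.mulVec v with hw
  have hST : S₀.transpose = S₀ := by
    rw [← Matrix.conjTranspose_eq_transpose_of_trivial, hS₀.eq]
  have key : ∀ k, dotProduct (b k) w = (μ k - lam) * c k := by
    intro k
    have h1 : dotProduct (b k) (S₀.mulVec v) = μ k * c k := by
      have hbk : S₀ *ᵥ (b k : Fin d → ℝ) = μ k • (b k : Fin d → ℝ) :=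
        hS₀.mulVec_eigenvectorBasis k
      rw [Matrix.dotProduct_mulVec, ← Matrix.mulVec_transpose, hST, hbk,
        smul_dotProduct]
      rfl
    have h2 : dotProduct (b k) (S.mulVec v) = lam * c k := by
      rw [heig, dotProduct_smul]; rfl
    have : w = S₀.mulVec v - S.mulVec v := by
      rw [hw, hE, Matrix.sub_mulVec]
    rw [this, dotProduct_sub, h1, h2]; ring
  set C : ℝ := ∑ p, ∑ q, |S p q - S₀ p q| with hC
  have hCE : ∀ p q, |E p q| = |S p q - S₀ p q| := by
    intro p q; rw [hE]; simp [abs_sub_comm]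
  have hC0 : 0 ≤ C := Finset.sum_nonneg fun p _ => Finset.sum_nonneg fun q _ => abs_nonneg _
  -- bound on ‖w‖²
  set T : ℝ := ∑ p, (v p)^2 with hT
  have hT0 : 0 < T := by
    obtain ⟨p, hp⟩ := Function.ne_iff.mp hv
    exact Finset.sum_pos' (fun q _ => sq_nonneg _) ⟨p, Finset.mem_univ p, by rw [pow_two]; exact mul_self_pos.mpr hp⟩
  have hvq : ∀ q, |v q| ≤ Real.sqrt T := by
    intro q
    rw [← Real.sqrt_sq_eq_abs]
    exact Real.sqrt_le_sqrt (Finset.single_le_sum (fun p _ => sq_nonneg (v p)) (Finset.mem_univ q))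
  have hwbound : ∑ p, (w p)^2 ≤ C^2 * T := by
    have hwp : ∀ p, |w p| ≤ (∑ q, |E p q|) * Real.sqrt T := by
      intro p
      calc |w p| = |∑ q, E p q * v q| := rfl
        _ ≤ ∑ q, |E p q * v q| := Finset.abs_sum_le_sum_abs _ _
        _ ≤ ∑ q, |E p q| * Real.sqrt T := by
            refine Finset.sum_le_sum fun q _ => ?_
            rw [abs_mul]
            exact mul_le_mul_of_nonneg_left (hvq q) (abs_nonneg _)
        _ = (∑ q, |E p q|) * Real.sqrt T := by rw [Finset.sum_mul]
    calc ∑ p, (w p)^2 ≤ ∑ p, ((∑ q, |E p q|) * Real.sqrt T)^2 := by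
          refine Finset.sum_le_sum fun p _ => ?_
          rw [← sq_abs (w p)]
          exact pow_le_pow_left₀ (abs_nonneg _) (hwp p) 2
      _ = (∑ p, (∑ q, |E p q|)^2) * T := by
          rw [Finset.sum_mul]
          refine Finset.sum_congr rfl fun p _ => ?_
          rw [mul_pow, Real.sq_sqrt hT0.le]
      _ ≤ (∑ p, ∑ q, |E p q|)^2 * T := by
          refine mul_le_mul_of_nonneg_right ?_ hT0.le
          exact Finset.sum_sq_le_sq_sum_of_nonneg fun p _ =>
            Finset.sum_nonneg fun q _ => abs_nonneg _
      _ = C^2 * T := by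
          congr 2
          exact Finset.sum_congr rfl fun p _ => Finset.sum_congr rfl fun q _ => hCE p q
  -- choose minimizing k
  obtain ⟨k₀, -, hk₀⟩ := Finset.exists_min_image Finset.univ (fun k => |lam - μ k|)
    ⟨⟨0, Nat.pos_of_ne_zero hd⟩, Finset.mem_univ _⟩
  refine ⟨k₀, ?_⟩
  set δ : ℝ := |lam - μ k₀| with hδ
  have hmain : δ^2 * T ≤ C^2 * T := by
    calc δ^2 * T = ∑ k, δ^2 * (c k)^2 := by rw [← Finset.mul_sum, hc]; rw [parseval v]
      _ ≤ ∑ k, (μ k - lam)^2 * (c k)^2 := by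
          refine Finset.sum_le_sum fun k _ => ?_
          refine mul_le_mul_of_nonneg_right ?_ (sq_nonneg _)
          rw [← sq_abs (μ k - lam), abs_sub_comm]
          exact pow_le_pow_left₀ (abs_nonneg _) (hk₀ k (Finset.mem_univ k)) 2
      _ = ∑ k, (dotProduct (b k) w)^2 := by
          refine Finset.sum_congr rfl fun k _ => ?_
          rw [key k, mul_pow]
      _ = ∑ p, (w p)^2 := parseval w
      _ ≤ C^2 * T := hwbound
  have hsq : δ^2 ≤ C^2 := le_of_mul_le_mul_right hmain hT0
  exact le_of_pow_le_pow_left₀ two_ne_zero hC0 hsq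

open Matrix Finset MeasureTheory
open scoped InnerProductSpace

section helpers

lemma det_to_eig {d : ℕ} (S : Matrix (Fin d) (Fin d) ℝ) (lam : ℝ)
    (h : (-S + lam • (1 : Matrix (Fin d) (Fin d) ℝ)).det = 0) :
    ∃ v, v ≠ 0 ∧ S.mulVec v = lam • v := by
  obtain ⟨v, hv0, hv⟩ := (Matrix.exists_mulVec_eq_zero_iff).mpr h
  refine ⟨v, hv0, ?_⟩
  have h2 : (-S + lam • (1 : Matrix (Fin d) (Fin d) ℝ)) *ᵥ v = lam • v - S *ᵥ v := by
    rw [Matrix.add_mulVec, Matrix.neg_mulVec, Matrix.smul_mulVec, Matrix.one_mulVec]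
    exact neg_add_eq_sub _ _
  rw [h2, sub_eq_zero] at hv
  exact hv.symm

lemma S_entry_close {n d : ℕ} (a R ε : ℝ) (ha : 0 ≤ a) (hR : 0 ≤ R) (hε : 0 ≤ ε)
    (A' : Fin n → ℝ) (hA' : ∀ i, |A' i| ≤ a)
    (z z' : Fin n → Fin d → ℝ)
    (hz : ∀ i p, |z i p| ≤ R) (hz' : ∀ i p, |z' i p| ≤ R)
    (hzz : ∀ i p, |z i p - z' i p| ≤ ε) :
    ∑ p, ∑ q, |(∑ i, A' i • vecMulVec (z i) (z i)) p q
      - (∑ i, A' i • vecMulVec (z' i) (z' i)) p q|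
      ≤ (d * d) * (n * (a * (2 * R * ε))) := by
  have inner : ∀ p q : Fin d, |(∑ i, A' i • vecMulVec (z i) (z i)) p q
      - (∑ i, A' i • vecMulVec (z' i) (z' i)) p q| ≤ n * (a * (2 * R * ε)) := by
    intro p q
    have he : (∑ i, A' i • vecMulVec (z i) (z i)) p q
        - (∑ i, A' i • vecMulVec (z' i) (z' i)) p q
        = ∑ i, A' i * (z i p * z i q - z' i p * z' i q) := by
      simp [Matrix.sum_apply, Matrix.vecMulVec_apply, mul_sub, ← Finset.sum_sub_distrib]
    rw [he]
    calc |∑ i, A' i * (z i p * z i q - z' i p * z' i q)|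
        ≤ ∑ i, |A' i * (z i p * z i q - z' i p * z' i q)| := Finset.abs_sum_le_sum_abs _ _
      _ ≤ ∑ i : Fin n, a * (2 * R * ε) := by
          refine Finset.sum_le_sum fun i _ => ?_
          rw [abs_mul]
          refine mul_le_mul (hA' i) ?_ (abs_nonneg _) ha
          have h1 : z i p * z i q - z' i p * z' i q
              = z i p * (z i q - z' i q) + (z i p - z' i p) * z' i q := by ring
          rw [h1]
          refine (abs_add_le _ _).trans ?_
          rw [abs_mul, abs_mul]
          have b1 : |z i p| * |z i q - z' i q| ≤ R * ε :=
            mul_le_mul (hz i p) (hzz i q) (abs_nonneg _) hR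
          have b2 : |z i p - z' i p| * |z' i q| ≤ ε * R :=
            mul_le_mul (hzz i p) (hz' i q) (abs_nonneg _) hε
          linarith
      _ = n * (a * (2 * R * ε)) := by rw [Finset.sum_const, Finset.card_univ,
          Fintype.card_fin, nsmul_eq_mul]
  calc ∑ p, ∑ q, |(∑ i, A' i • vecMulVec (z i) (z i)) p q
        - (∑ i, A' i • vecMulVec (z' i) (z' i)) p q|
      ≤ ∑ _p : Fin d, ∑ _q : Fin d, n * (a * (2 * R * ε)) := by
        exact Finset.sum_le_sum fun p _ => Finset.sum_le_sum fun q _ => inner p q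
    _ = (d * d) * (n * (a * (2 * R * ε))) := by
        simp [Finset.sum_const, Finset.card_univ, mul_assoc]

lemma S_isHermitian {n d : ℕ} (A' : Fin n → ℝ) (z : Fin n → Fin d → ℝ) :
    (∑ i, A' i • vecMulVec (z i) (z i)).IsHermitian := by
  unfold Matrix.IsHermitian
  ext p q
  simp [Matrix.conjTranspose_apply, Matrix.sum_apply, Matrix.vecMulVec_apply, mul_comm]

end helpers

open MeasureTheory Finset
open scoped ENNReal

open Matrix in
set_option maxHeartbeats 1000000 in
/-- Let `𝒜 ⊆ ℝ` be finite and `m > d n`. For each fixed `A ∈ 𝒜^{n×m}` there is a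
Lebesgue-null set `𝒞(A) ⊆ ℝᵐ` such that for every `λ ∉ 𝒞(A)` and every choice of
vectors `z_1,…,z_n ∈ ℝᵈ`, at least one of the matrices
`M_j = -∑_i z_i z_iᵀ A_{ij} + λ_j I_d` is nonsingular. -/
theorem exists_null_set_one_matrix_nonsingular_rankOne {n m d : ℕ} (hm : d * n < m)
    (𝒜 : Finset ℝ) (A : Fin n → Fin m → ℝ) (hA : ∀ i j, A i j ∈ 𝒜) :
    ∃ 𝒞 : Set (Fin m → ℝ), volume 𝒞 = 0 ∧
      ∀ lam : Fin m → ℝ, lam ∉ 𝒞 →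
        ∀ z : Fin n → (Fin d → ℝ),
          ∃ j, (-(∑ i, A i j • Matrix.vecMulVec (z i) (z i))
            + lam j • (1 : Matrix (Fin d) (Fin d) ℝ)).det ≠ 0 := by
  classical
  have hm0 : 0 < m := lt_of_le_of_lt (Nat.zero_le _) hm
  rcases Nat.eq_zero_or_pos d with hd0 | hd0
  · subst hd0
    refine ⟨∅, measure_empty, fun lam _ z => ⟨⟨0, hm0⟩, ?_⟩⟩
    rw [Matrix.det_fin_zero]; norm_num
  -- abbreviations
  set S : (Fin n → Fin d → ℝ) → Fin m → Matrix (Fin d) (Fin d) ℝ :=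
    fun z j => ∑ i, A i j • vecMulVec (z i) (z i) with hS
  have hSym : ∀ z j, (S z j).IsHermitian := fun z j => S_isHermitian _ z
  set B : Set (Fin m → ℝ) :=
    {lam | ∃ z : Fin n → Fin d → ℝ, ∀ j, (-(S z j) + lam j • (1 : Matrix (Fin d) (Fin d) ℝ)).det = 0}
    with hB
  refine ⟨B, ?_, fun lam hlam z => ?_⟩
  swap
  · by_contra h
    push_neg at h
    exact hlam ⟨z, h⟩
  -- the null part
  set a : ℝ := ∑ x ∈ 𝒜, |x| with ha
  have ha0 : 0 ≤ a := Finset.sum_nonneg fun x _ => abs_nonneg x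
  have haA : ∀ i j, |A i j| ≤ a :=
    fun i j => Finset.single_le_sum (fun x _ => abs_nonneg x) (hA i j)
  set BR : ℕ → Set (Fin m → ℝ) := fun R =>
    {lam | ∃ z : Fin n → Fin d → ℝ, (∀ i p, |z i p| ≤ R) ∧
      ∀ j, (-(S z j) + lam j • (1 : Matrix (Fin d) (Fin d) ℝ)).det = 0} with hBR
  have hBsub : B ⊆ ⋃ R : ℕ, BR R := by
    rintro lam ⟨z, hz⟩
    have : ∃ R : ℕ, ∀ i p, |z i p| ≤ R := by
      refine ⟨Nat.ceil (∑ i, ∑ p, |z i p|), fun i p => ?_⟩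
      refine le_trans ?_ (Nat.le_ceil _)
      refine le_trans (Finset.single_le_sum (f := fun p => |z i p|)
        (fun q _ => abs_nonneg _) (Finset.mem_univ p)) ?_
      exact Finset.single_le_sum (f := fun i => ∑ p, |z i p|)
        (fun i _ => Finset.sum_nonneg fun q _ => abs_nonneg _) (Finset.mem_univ i)
    obtain ⟨R, hR⟩ := this
    exact Set.mem_iUnion.mpr ⟨R, ⟨z, hR, hz⟩⟩
  have hnull : ∀ R : ℕ, volume (BR R) = 0 := by
    intro R
    set c : ℝ := (d * d) * (n * (a * (2 * ((R : ℝ) + 1)))) with hc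
    have hc0 : 0 ≤ c := by positivity
    set bnd : ℕ → ℝ := fun t =>
      ((2 * (R : ℝ) * t + 3)) ^ (d * n) * ((d : ℝ) * (2 * (c / t))) ^ m with hbnd
    have key : ∀ t : ℕ, 1 ≤ t → volume (BR R) ≤ ENNReal.ofReal (bnd t) := by
      intro t ht
      have ht0 : (0 : ℝ) < t := by exact_mod_cast ht
      have ht1 : (1 : ℝ) ≤ t := by exact_mod_cast ht
      set zt : (Fin n → Fin d → ℤ) → Fin n → Fin d → ℝ :=
        fun g i p => (g i p : ℝ) / t with hzt
      set F : Finset (Fin n → Fin d → ℤ) :=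
        Fintype.piFinset fun _ => Fintype.piFinset fun _ =>
          Finset.Icc (-(R * t + 1) : ℤ) ((R * t + 1) : ℤ) with hF
      set tube : (Fin n → Fin d → ℤ) → Set (Fin m → ℝ) := fun g =>
        Set.univ.pi fun j => ⋃ k : Fin d,
          Metric.closedBall ((hSym (zt g) j).eigenvalues k) (c / t) with htube
      -- covering
      have cover : BR R ⊆ ⋃ g ∈ F, tube g := by
        rintro lam ⟨z, hzR, hdet⟩
        set g : Fin n → Fin d → ℤ := fun i p => ⌊z i p * t⌋ with hg
        have habs : ∀ i p, -((R : ℝ) * t) ≤ z i p * t ∧ z i p * t ≤ (R : ℝ) * t := by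
          intro i p
          have h1 := abs_le.mp (hzR i p)
          constructor <;> nlinarith [h1.1, h1.2, ht0]
        have hgF : g ∈ F := by
          simp only [hF, Fintype.mem_piFinset, Finset.mem_Icc]
          intro i p
          obtain ⟨hlo, hhi⟩ := habs i p
          constructor
          · rw [Int.le_floor]; push_cast; nlinarith
          · have h2 : (⌊z i p * t⌋ : ℝ) ≤ (R : ℝ) * t := le_trans (Int.floor_le _) hhi
            have h3 : (⌊z i p * t⌋ : ℝ) ≤ ((R * t + 1 : ℤ) : ℝ) := by push_cast; nlinarith
            exact_mod_cast h3
        have hclose : ∀ i p, |z i p - zt g i p| ≤ 1 / t := by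
          intro i p
          have hnum1 : 0 ≤ z i p * t - (⌊z i p * t⌋ : ℝ) := by
            linarith [Int.floor_le (z i p * t)]
          have hnum2 : z i p * t - (⌊z i p * t⌋ : ℝ) ≤ 1 := by
            linarith [Int.lt_floor_add_one (z i p * t)]
          have h1 : z i p - zt g i p = (z i p * t - (⌊z i p * t⌋ : ℝ)) / t := by
            show z i p - (⌊z i p * t⌋ : ℝ) / t = _
            field_simp
          rw [h1, abs_div, abs_of_pos ht0, abs_of_nonneg hnum1]
          gcongr
        have hztb : ∀ i p, |zt g i p| ≤ (R : ℝ) + 1 := by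
          intro i p
          have h1 : zt g i p = (⌊z i p * t⌋ : ℝ) / t := rfl
          rw [h1, abs_div, abs_of_pos ht0, div_le_iff₀ ht0]
          obtain ⟨hlo, hhi⟩ := habs i p
          rw [abs_le]
          constructor
          · have := Int.lt_floor_add_one (z i p * t)
            nlinarith
          · have := Int.floor_le (z i p * t)
            nlinarith
        refine Set.mem_biUnion hgF ?_
        simp only [htube, Set.mem_pi, Set.mem_univ, forall_true_left]
        intro j
        obtain ⟨v, hv0, hv⟩ := det_to_eig _ _ (hdet j)
        obtain ⟨k, hk⟩ := eig_close (S z j) (S (zt g) j) (hSym (zt g) j) (lam j) v hv0 hv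
        refine Set.mem_iUnion.mpr ⟨k, ?_⟩
        rw [Metric.mem_closedBall, Real.dist_eq]
        have hSC := S_entry_close a ((R : ℝ) + 1) (1 / t) ha0 (by positivity) (by positivity)
          (fun i => A i j) (fun i => haA i j) z (zt g)
          (fun i p => (hzR i p).trans (by linarith)) hztb hclose
        simp only [hS] at hk
        refine hk.trans (hSC.trans (le_of_eq ?_))
        rw [hc]; field_simp; try ring
      -- measure estimate
      set V : ℝ≥0∞ := ((d : ℝ≥0∞) * ENNReal.ofReal (2 * (c / t))) ^ m with hV
      have htubevol : ∀ g, volume (tube g) ≤ V := by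
        intro g
        simp only [htube]
        rw [MeasureTheory.volume_pi_pi]
        have hj : ∀ j : Fin m, volume (⋃ k : Fin d,
            Metric.closedBall ((hSym (zt g) j).eigenvalues k) (c / t))
            ≤ (d : ℝ≥0∞) * ENNReal.ofReal (2 * (c / t)) := by
          intro j
          refine (measure_iUnion_le _).trans ?_
          rw [tsum_fintype]
          have : ∀ k : Fin d, volume (Metric.closedBall ((hSym (zt g) j).eigenvalues k) (c / t))
              = ENNReal.ofReal (2 * (c / t)) := fun k => Real.volume_closedBall _ _
          simp only [this, Finset.sum_const, Finset.card_univ, Fintype.card_fin, nsmul_eq_mul]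
          exact le_rfl
        calc ∏ j, volume (⋃ k : Fin d,
              Metric.closedBall ((hSym (zt g) j).eigenvalues k) (c / t))
            ≤ ∏ _j : Fin m, ((d : ℝ≥0∞) * ENNReal.ofReal (2 * (c / t))) :=
              Finset.prod_le_prod' fun j _ => hj j
          _ = V := by rw [Finset.prod_const, Finset.card_univ, Fintype.card_fin]
      have hIcc : (Finset.Icc (-(R * t + 1) : ℤ) ((R * t + 1) : ℤ)).card = 2 * (R * t) + 3 := by
        rw [Int.card_Icc]
        have h3 : ((R : ℤ) * (t : ℤ) + 1 + 1 - -((R : ℤ) * (t : ℤ) + 1))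
            = ((2 * (R * t) + 3 : ℕ) : ℤ) := by push_cast; ring
        rw [h3, Int.toNat_natCast]
      have hcard : F.card = (2 * (R * t) + 3) ^ (d * n) := by
        rw [hF]
        simp only [Fintype.card_piFinset, hIcc, Finset.prod_const, Finset.card_univ,
          Fintype.card_fin]
        rw [← pow_mul]
      have hstep : volume (BR R) ≤ (F.card : ℝ≥0∞) * V := by
        refine (measure_mono cover).trans ?_
        refine (measure_biUnion_finset_le F tube).trans ?_
        calc ∑ g ∈ F, volume (tube g) ≤ ∑ _g ∈ F, V := Finset.sum_le_sum fun g _ => htubevol g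
          _ = (F.card : ℝ≥0∞) * V := by rw [Finset.sum_const, nsmul_eq_mul]
      refine hstep.trans ?_
      rw [hcard, hV]
      have hd' : (d : ℝ≥0∞) = ENNReal.ofReal (d : ℝ) := by
        rw [ENNReal.ofReal_natCast]
      rw [hd', ← ENNReal.ofReal_mul (by positivity), ← ENNReal.ofReal_pow (by positivity)]
      rw [show (((2 * (R * t) + 3) ^ (d * n) : ℕ) : ℝ≥0∞)
          = ENNReal.ofReal (((2 * (R * t) + 3) ^ (d * n) : ℕ) : ℝ) by rw [ENNReal.ofReal_natCast]]
      rw [← ENNReal.ofReal_mul (by positivity)]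
      refine ENNReal.ofReal_le_ofReal (le_of_eq ?_)
      rw [hbnd]
      push_cast
      ring
    -- limit
    have hlim : Filter.Tendsto (fun t : ℕ => ENNReal.ofReal (bnd t)) Filter.atTop (nhds 0) := by
      have hreal : Filter.Tendsto bnd Filter.atTop (nhds 0) := by
        set K : ℝ := (2 * (R : ℝ) + 3) ^ (d * n) * ((d : ℝ) * (2 * c)) ^ m with hK
        have hK0 : 0 ≤ K := by positivity
        refine squeeze_zero' ?_ ?_ (g := fun t : ℕ => K * (1 / (t : ℝ)) ^ (m - d * n)) ?_
        · filter_upwards [Filter.eventually_ge_atTop 1] with t ht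
          have ht0 : (0 : ℝ) ≤ t := by positivity
          rw [hbnd]; positivity
        · filter_upwards [Filter.eventually_ge_atTop 1] with t ht
          have ht0 : (0 : ℝ) < t := by exact_mod_cast ht
          have ht1 : (1 : ℝ) ≤ t := by exact_mod_cast ht
          rw [hbnd]
          have h1 : ((2 * (R : ℝ) * t + 3)) ^ (d * n) ≤ ((2 * (R : ℝ) + 3) * t) ^ (d * n) := by
            refine pow_le_pow_left₀ (by positivity) (by nlinarith) _
          have h2 : ((d : ℝ) * (2 * (c / t))) ^ m = ((d : ℝ) * (2 * c)) ^ m * (1 / t) ^ m := by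
            rw [← mul_pow]
            congr 1
            field_simp
          calc ((2 * (R : ℝ) * t + 3)) ^ (d * n) * ((d : ℝ) * (2 * (c / t))) ^ m
              ≤ ((2 * (R : ℝ) + 3) * t) ^ (d * n) * ((d : ℝ) * (2 * (c / t))) ^ m := by
                refine mul_le_mul_of_nonneg_right h1 (by positivity)
            _ = K * ((t : ℝ) ^ (d * n) * (1 / t) ^ m) := by
                rw [h2, mul_pow, hK]; ring
            _ = K * (1 / (t : ℝ)) ^ (m - d * n) := by
                congr 1
                have hsplit : (1 / (t : ℝ)) ^ m = (1 / t) ^ (d * n) * (1 / t) ^ (m - d * n) := by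
                  rw [← pow_add]
                  congr 1
                  omega
                rw [hsplit, ← mul_assoc, ← mul_pow]
                rw [show (t : ℝ) * (1 / t) = 1 by field_simp]
                rw [one_pow, one_mul]
        · have hp : Filter.Tendsto (fun t : ℕ => (1 / (t : ℝ)) ^ (m - d * n))
              Filter.atTop (nhds 0) := by
            have := (tendsto_one_div_atTop_nhds_zero_nat (𝕜 := ℝ)).pow (m - d * n)
            rwa [zero_pow (by omega)] at this
          simpa using hp.const_mul K
      have := ENNReal.tendsto_ofReal (f := Filter.atTop) hreal
      simpa using this
    have hle : volume (BR R) ≤ 0 :=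
      ge_of_tendsto hlim (Filter.eventually_atTop.mpr ⟨1, fun t ht => key t ht⟩)
    exact le_zero_iff.mp hle
  have : volume (⋃ R : ℕ, BR R) = 0 := measure_iUnion_null hnull
  exact measure_mono_null hBsub this
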